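/- Let (𝒞,J) and (𝒟,K) be small sites, ℰ = Sheaf J and ℱ = Sheaf K the corresponding categories of Type-valued sheaves, each equipped with its canonical Grothendieck topology (the finest topology for which every representable presheaf is a sheaf). Let p : ℱ ⥤ ℰ be a functor preserving all small colimits which is a comorphism of sites from (ℱ, canonical topology) to (ℰ, canonical topology). Then p is a local fibration (with respect to these canonical topologies) if and only if p is a fibration in the Street sense. -/

import Mathlib

open CategoryTheory Limits

universe w u

/-- A morphism `f : d' ⟶ d` is cartesian for a functor `p : 𝒟 ⥤ 𝒞`. -/
def IsCartesianFor {D : Type*} [Category D] {C : Type*} [Category C] (p : D ⥤ C)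
    {d' d : D} (f : d' ⟶ d) : Prop :=
  ∀ {d'' : D} (g : d'' ⟶ d) (h : p.obj d'' ⟶ p.obj d'),
    h ≫ p.map f = p.map g → ∃! h' : d'' ⟶ d', p.map h' = h ∧ h' ≫ f = g

/-- A functor `p : 𝒟 ⥤ 𝒞` is a fibration in the Street sense. -/
def IsStreetFibration {D : Type*} [Category D] {C : Type*} [Category C] (p : D ⥤ C) : Prop :=
  ∀ (d : D) (c : C) (f : c ⟶ p.obj d),
    ∃ (d' : D) (fhat : d' ⟶ d) (σ : p.obj d' ≅ c),
      IsCartesianFor p fhat ∧ p.map fhat = σ.hom ≫ f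

/-- A morphism `f : d' ⟶ d` is `K`-locally cartesian for `p : 𝒟 ⥤ 𝒞`. -/
def LocallyCartesian {D : Type*} [Category D] {C : Type*} [Category C]
    (K : GrothendieckTopology D) (p : D ⥤ C) {d' d : D} (f : d' ⟶ d) : Prop :=
  (∀ (d'' : D) (g : d'' ⟶ d) (h : p.obj d'' ⟶ p.obj d'),
      h ≫ p.map f = p.map g →
      ∃ S : Sieve d'', S ∈ K d'' ∧
        ∀ {e : D} (v : e ⟶ d''), S.arrows v →
          ∃ hv : e ⟶ d', p.map v ≫ h = p.map hv ∧ hv ≫ f = v ≫ g) ∧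
  (∀ (d'' : D) (h h' : d'' ⟶ d'), h ≫ f = h' ≫ f → p.map h = p.map h' →
      ∃ S : Sieve d'', S ∈ K d'' ∧ ∀ {e : D} (v : e ⟶ d''), S.arrows v → v ≫ h = v ≫ h')

/-- A functor `p : (𝒟, K) ⥤ (𝒞, J)` is a comorphism of sites. -/
def IsComorphismOfSites {D : Type*} [Category D] {C : Type*} [Category C] (p : D ⥤ C)
    (K : GrothendieckTopology D) (J : GrothendieckTopology C) : Prop :=
  ∀ (d : D) (S : Sieve (p.obj d)), S ∈ J (p.obj d) → S.functorPullback p ∈ K d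

/-- A comorphism of sites `p : (𝒟,K) ⟶ (𝒞,J)` is a local fibration if every morphism
`f : c ⟶ p(d)` can be locally factored through `K`-locally cartesian morphisms along a
`J`-covering family. -/
def IsLocalFibration {D : Type*} [Category D] {C : Type*} [Category C] (p : D ⥤ C)
    (K : GrothendieckTopology D) (J : GrothendieckTopology C) : Prop :=
  IsComorphismOfSites p K J ∧
    ∀ (d : D) (c : C) (f : c ⟶ p.obj d),
      ∃ (ι : Type w) (di : ι → D) (fi : ∀ i, p.obj (di i) ⟶ c) (fhat : ∀ i, di i ⟶ d),
        Sieve.generate (Presieve.ofArrows (fun i => p.obj (di i)) fi) ∈ J c ∧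
          ∀ i, LocallyCartesian K p (fhat i) ∧ fi i ≫ f = p.map (fhat i)

variable {Cs Ds : Type u} [SmallCategory Cs] [SmallCategory Ds]

namespace LocFibAux

open Opposite

section CanonTools

variable {T : Type*} [Category T]

/-- Separation for canonical-topology covering sieves. -/
lemma canon_sep {X Z : T} {S : Sieve X} (hS : S ∈ Sheaf.canonicalTopology T X)
    {α β : X ⟶ Z} (h : ∀ ⦃Y : T⦄ (v : Y ⟶ X), S.arrows v → v ≫ α = v ≫ β) : α = β := by
  have hF : Presieve.IsSheafFor (yoneda.obj Z) S.arrows :=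
    Sheaf.isSheaf_yoneda_obj Z S hS
  refine yoneda.map_injective (hF.hom_ext (yoneda.map α) (yoneda.map β) ?_)
  ext Y ⟨v, hv⟩
  exact h v hv

/-- Gluing for canonical-topology covering sieves. -/
lemma canon_glue {X Z : T} {S : Sieve X} (hS : S ∈ Sheaf.canonicalTopology T X)
    (φ : ∀ ⦃Y : T⦄ (v : Y ⟶ X), S.arrows v → (Y ⟶ Z))
    (hφ : ∀ ⦃Y₁ Y₂ W : T⦄ (g₁ : W ⟶ Y₁) (g₂ : W ⟶ Y₂) (v₁ : Y₁ ⟶ X) (hv₁ : S.arrows v₁)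
      (v₂ : Y₂ ⟶ X) (hv₂ : S.arrows v₂), g₁ ≫ v₁ = g₂ ≫ v₂ →
        g₁ ≫ φ v₁ hv₁ = g₂ ≫ φ v₂ hv₂) :
    ∃ ψ : X ⟶ Z, ∀ ⦃Y : T⦄ (v : Y ⟶ X) (hv : S.arrows v), v ≫ ψ = φ v hv := by
  have hF : Presieve.IsSheafFor (yoneda.obj Z) S.arrows :=
    Sheaf.isSheaf_yoneda_obj Z S hS
  let x : Presieve.FamilyOfElements (yoneda.obj Z) S.arrows := fun Y v hv => φ v hv
  have hx : x.Compatible := by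
    intro Y₁ Y₂ W g₁ g₂ f₁ f₂ h₁ h₂ hcomm
    exact hφ g₁ g₂ f₁ h₁ f₂ h₂ hcomm
  obtain ⟨t, ht, -⟩ := hF x hx
  exact ⟨t, fun Y v hv => ht v hv⟩

/-- The sieve of morphisms equalizing two parallel maps. -/
def eqSieve {E Z : T} (x y : E ⟶ Z) : Sieve E where
  arrows Y t := t ≫ x = t ≫ y
  downward_closed := by
    intro Y Y' t ht g
    change (g ≫ t) ≫ x = (g ≫ t) ≫ y
    rw [Category.assoc, Category.assoc, ht]

lemma eqSieve_arrows {E Z : T} (x y : E ⟶ Z) {Y : T} (t : Y ⟶ E) :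
    (eqSieve x y).arrows t ↔ t ≫ x = t ≫ y := Iff.rfl

end CanonTools

section Adj

variable (J : GrothendieckTopology Cs) (K : GrothendieckTopology Ds)
variable (p : Sheaf K (Type u) ⥤ Sheaf J (Type u)) [PreservesColimitsOfSize.{u, u} p]

/-- The composite of sheafification with `p`. -/
noncomputable abbrev LL : (Dsᵒᵖ ⥤ Type u) ⥤ Sheaf J (Type u) :=
  presheafToSheaf K (Type u) ⋙ p

noncomputable instance : PreservesColimitsOfSize.{u, u} (LL J K p) := by
  haveI : PreservesColimitsOfSize.{u, u} (presheafToSheaf K (Type u)) :=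
    (sheafificationAdjunction K (Type u)).leftAdjoint_preservesColimits
  infer_instance

noncomputable instance : (LL J K p).IsLeftAdjoint :=
  Presheaf.isLeftAdjoint_of_preservesColimits.{0} (LL J K p)

/-- The adjunction for `LL`. -/
noncomputable def adjL : LL J K p ⊣ (LL J K p).rightAdjoint :=
  Adjunction.ofIsLeftAdjoint (LL J K p)

omit [PreservesColimitsOfSize.{u, u} p] in
lemma isIso_LL_map_functorInclusion {U : Ds} (S : Sieve U) (hS : S ∈ K U) :
    IsIso ((LL J K p).map S.functorInclusion) := by
  haveI h1 : Presheaf.IsLocallyInjective K S.functorInclusion := by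
    apply Presheaf.isLocallyInjective_of_injective
    intro X a b hab
    exact Subtype.ext hab
  haveI h2 : Presheaf.IsLocallySurjective K S.functorInclusion := by
    constructor
    intro V s
    refine K.superset_covering ?_ (K.pullback_stable s hS)
    intro W g hg
    exact ⟨⟨g ≫ s, hg⟩, rfl⟩
  have hW : K.W S.functorInclusion := GrothendieckTopology.W_of_isLocallyBijective K _
  rw [GrothendieckTopology.W_iff] at hW
  have : IsIso (p.map ((presheafToSheaf K (Type u)).map S.functorInclusion)) := inferInstance
  exact this

lemma isSheaf_rightAdjoint_LL (Z : Sheaf J (Type u)) :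
    Presheaf.IsSheaf K ((LL J K p).rightAdjoint.obj Z) := by
  rw [isSheaf_iff_isSheaf_of_type]
  intro U S hS
  rw [Presieve.isSheafFor_iff_yonedaSheafCondition]
  intro φ
  haveI := isIso_LL_map_functorInclusion J K p S hS
  refine ⟨((adjL J K p).homEquiv _ _)
    (inv ((LL J K p).map S.functorInclusion) ≫ ((adjL J K p).homEquiv _ _).symm φ), ?_, ?_⟩
  · show S.functorInclusion ≫ _ = φ
    rw [← Adjunction.homEquiv_naturality_left, IsIso.hom_inv_id_assoc, Equiv.apply_symm_apply]
  · intro g' hg'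
    have h2 : (LL J K p).map S.functorInclusion ≫ ((adjL J K p).homEquiv _ _).symm g'
        = ((adjL J K p).homEquiv _ _).symm φ := by
      rw [← Adjunction.homEquiv_naturality_left_symm, hg']
    rw [← Equiv.apply_symm_apply ((adjL J K p).homEquiv _ _) g', ← h2, ← Category.assoc,
      IsIso.inv_hom_id, Category.id_comp]

/-- The right adjoint of `p`, as a functor into sheaves. -/
noncomputable def uF : Sheaf J (Type u) ⥤ Sheaf K (Type u) where
  obj Z := ⟨(LL J K p).rightAdjoint.obj Z, isSheaf_rightAdjoint_LL J K p Z⟩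
  map φ := ⟨(LL J K p).rightAdjoint.map φ⟩
  map_id Z := by ext1; exact (LL J K p).rightAdjoint.map_id Z
  map_comp φ ψ := by ext1; exact (LL J K p).rightAdjoint.map_comp φ ψ

/-- `p` is left adjoint to `uF`. -/
noncomputable def padj : p ⊣ uF J K p :=
  Adjunction.restrictFullyFaithful (adjL J K p)
    (fullyFaithfulSheafToPresheaf K (Type u)) (Functor.FullyFaithful.id _)
    (((sheafToPresheaf K (Type u)).associator (presheafToSheaf K (Type u)) p).symm ≪≫
      Functor.isoWhiskerRight (asIso (sheafificationAdjunction K (Type u)).counit) p ≪≫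
      p.leftUnitor ≪≫ (p.rightUnitor).symm)
    (NatIso.ofComponents (fun Z => Iso.refl _) (by intro X Y f; simp; rfl))

end Adj

section Main

variable {J : GrothendieckTopology Cs} {K : GrothendieckTopology Ds}
variable {p : Sheaf K (Type u) ⥤ Sheaf J (Type u)}

omit [SmallCategory Cs] in
/-- local uniqueness upgraded to genuine uniqueness -/
lemma uniq_of_lc {J' : Type*} [Category J'] {p' : Sheaf K (Type u) ⥤ J'}
    {d' d : Sheaf K (Type u)} {fh : d' ⟶ d}
    (hlc : LocallyCartesian (Sheaf.canonicalTopology (Sheaf K (Type u))) p' fh)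
    {a : Sheaf K (Type u)} {ψ ψ' : a ⟶ d'}
    (h1 : ψ ≫ fh = ψ' ≫ fh) (h2 : p'.map ψ = p'.map ψ') : ψ = ψ' := by
  obtain ⟨S, hS, hv⟩ := hlc.2 a ψ ψ' h1 h2
  exact canon_sep hS (fun Y v hvv => hv v hvv)

/-- Locally cartesian morphisms for the canonical topologies are cartesian. -/
lemma cart_of_lc {uu : Sheaf J (Type u) ⥤ Sheaf K (Type u)} (A : p ⊣ uu)
    {d' d : Sheaf K (Type u)} {fh : d' ⟶ d}
    (hlc : LocallyCartesian (Sheaf.canonicalTopology (Sheaf K (Type u))) p fh) :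
    IsCartesianFor p fh := by
  intro d'' g h hcomp
  obtain ⟨S, hS, hex⟩ := hlc.1 d'' g h hcomp
  have hex' : ∀ (e : Sheaf K (Type u)) (v : e ⟶ d''), S.arrows v →
      ∃ hv : e ⟶ d', p.map v ≫ h = p.map hv ∧ hv ≫ fh = v ≫ g := fun e v hv => hex v hv
  choose lift hl1 hl2 using hex'
  have hcompat : ∀ ⦃Y₁ Y₂ W : Sheaf K (Type u)⦄ (g₁ : W ⟶ Y₁) (g₂ : W ⟶ Y₂) (v₁ : Y₁ ⟶ d'')
      (hv₁ : S.arrows v₁) (v₂ : Y₂ ⟶ d'') (hv₂ : S.arrows v₂), g₁ ≫ v₁ = g₂ ≫ v₂ →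
        g₁ ≫ lift Y₁ v₁ hv₁ = g₂ ≫ lift Y₂ v₂ hv₂ := by
    intro Y₁ Y₂ W g₁ g₂ v₁ hv₁ v₂ hv₂ hcomm
    apply uniq_of_lc hlc
    · rw [Category.assoc, Category.assoc, hl2, hl2, ← Category.assoc, ← Category.assoc, hcomm]
    · rw [p.map_comp, p.map_comp, ← hl1, ← hl1, ← Category.assoc, ← Category.assoc,
        ← p.map_comp, ← p.map_comp, hcomm]
  obtain ⟨h', hh'⟩ := canon_glue hS (fun Y v hv => lift Y v hv) hcompat
  have hgf : h' ≫ fh = g := by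
    apply canon_sep hS
    intro Y v hv
    rw [← Category.assoc, hh' v hv, hl2]
  have hpf : p.map h' = h := by
    apply (A.homEquiv _ _).injective
    apply canon_sep hS
    intro Y v hv
    rw [← Adjunction.homEquiv_naturality_left, ← Adjunction.homEquiv_naturality_left]
    congr 1
    rw [← p.map_comp, hh' v hv, ← hl1]
  refine ⟨h', ⟨hpf, hgf⟩, ?_⟩
  rintro ψ ⟨hψ1, hψ2⟩
  exact uniq_of_lc hlc (hψ2.trans hgf.symm) (by rw [hψ1, hpf])

end Main

end LocFibAux

/-- A small-colimit-preserving comorphism of sites between sheaf toposes equipped with their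
canonical topologies is a local fibration iff it is a fibration in the Street sense. -/
theorem localFibration_iff_streetFibration_of_toposes
    (J : GrothendieckTopology Cs) (K : GrothendieckTopology Ds)
    (p : Sheaf K (Type u) ⥤ Sheaf J (Type u))
    [PreservesColimitsOfSize.{u, u} p]
    (hp : IsComorphismOfSites p (Sheaf.canonicalTopology (Sheaf K (Type u)))
      (Sheaf.canonicalTopology (Sheaf J (Type u)))) :
    IsLocalFibration.{u + 1} p (Sheaf.canonicalTopology (Sheaf K (Type u)))
        (Sheaf.canonicalTopology (Sheaf J (Type u))) ↔
      IsStreetFibration p := by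
  constructor
  · rintro ⟨-, hloc⟩
    intro d c f
    let uu := LocFibAux.uF J K p
    let A : p ⊣ uu := LocFibAux.padj J K p
    obtain ⟨ι, di, fi, fhat, hScov, hprops⟩ := hloc d c f
    have hcart : ∀ i, IsCartesianFor p (fhat i) :=
      fun i => LocFibAux.cart_of_lc A (hprops i).1
    have hfac : ∀ i, fi i ≫ f = p.map (fhat i) := fun i => (hprops i).2
    -- the comma-pullback candidate for the cartesian lift
    let d' : Sheaf K (Type u) := pullback (A.unit.app d) (uu.map f)
    let fh : d' ⟶ d := pullback.fst _ _
    let sn : d' ⟶ uu.obj c := pullback.snd _ _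
    let σt : p.obj d' ⟶ c := (A.homEquiv d' c).symm sn
    have key : ∀ {e : Sheaf K (Type u)} (ψ : e ⟶ d'),
        p.map ψ ≫ σt = (A.homEquiv e c).symm (ψ ≫ sn) :=
      fun ψ => (Adjunction.homEquiv_naturality_left_symm _ _ _).symm
    have F1 : σt ≫ f = p.map fh := by
      apply (A.homEquiv _ _).injective
      rw [Adjunction.homEquiv_naturality_right, Equiv.apply_symm_apply, ← pullback.condition,
        Adjunction.homEquiv_unit]
      exact A.unit.naturality fh
    -- universal property of d'
    have UP : ∀ (e : Sheaf K (Type u)) (g' : e ⟶ d) (h : p.obj e ⟶ c), h ≫ f = p.map g' →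
        ∃! ψ : e ⟶ d', ψ ≫ fh = g' ∧ p.map ψ ≫ σt = h := by
      intro e g' h hcond
      have hsq : g' ≫ A.unit.app d = (A.homEquiv e c) h ≫ uu.map f := by
        rw [← Adjunction.homEquiv_naturality_right, hcond, Adjunction.homEquiv_unit]
        exact A.unit.naturality g'
      refine ⟨pullback.lift g' ((A.homEquiv e c) h) hsq,
        ⟨pullback.lift_fst _ _ _, by
          rw [key, pullback.lift_snd, Equiv.symm_apply_apply]⟩, ?_⟩
      rintro ψ ⟨hψ1, hψ2⟩
      apply pullback.hom_ext
      · rw [pullback.lift_fst]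
        exact hψ1
      · rw [pullback.lift_snd]
        apply (A.homEquiv e c).symm.injective
        rw [Equiv.symm_apply_apply, ← key ψ, hψ2]
    -- the canonical maps `h i : di i ⟶ d'`
    have hexists : ∀ i, ∃ hi : di i ⟶ d', hi ≫ fh = fhat i ∧ p.map hi ≫ σt = fi i :=
      fun i => (UP _ (fhat i) (fi i) (hfac i)).exists
    choose hmap hi1 hi2 using hexists
    -- exact factorization through `hmap i`
    have factor : ∀ {e : Sheaf K (Type u)} (w : e ⟶ d') (i : ι)
        (g'' : p.obj e ⟶ p.obj (di i)), p.map w ≫ σt = g'' ≫ fi i →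
        ∃ wl : e ⟶ di i, p.map wl = g'' ∧ wl ≫ hmap i = w := by
      intro e w i g'' hw
      have hcomp : g'' ≫ p.map (fhat i) = p.map (w ≫ fh) := by
        rw [← hfac i, ← Category.assoc, ← hw, Category.assoc, F1, ← p.map_comp]
      obtain ⟨wl, ⟨hwl1, hwl2⟩, -⟩ := hcart i (w ≫ fh) g'' hcomp
      refine ⟨wl, hwl1, ?_⟩
      have h0 : (p.map w ≫ σt) ≫ f = p.map (w ≫ fh) := by
        rw [Category.assoc, F1, ← p.map_comp]
      obtain ⟨ψ₀, -, huniq⟩ := UP e (w ≫ fh) (p.map w ≫ σt) h0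
      have e1 : wl ≫ hmap i = ψ₀ := by
        refine huniq _ ⟨by rw [Category.assoc, hi1 i, hwl2], ?_⟩
        rw [p.map_comp, Category.assoc, hi2 i, hwl1, ← hw]
      have e2 : w = ψ₀ := huniq _ ⟨rfl, rfl⟩
      rw [e1, e2]
    -- σt is epi
    have hepi : Epi σt := by
      constructor
      intro Z α β hab
      apply LocFibAux.canon_sep hScov
      rintro Y v ⟨Y', t, w', hof, rfl⟩
      cases hof with
      | mk i =>
        rw [Category.assoc, Category.assoc, ← hi2 i, Category.assoc, Category.assoc, hab]
    -- the local step for monomorphy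
    have monostep : ∀ {E : Sheaf J (Type u)} (x y : E ⟶ p.obj d') (i : ι)
        (g'' : E ⟶ p.obj (di i)), x ≫ σt = y ≫ σt → x ≫ σt = g'' ≫ fi i →
        LocFibAux.eqSieve x y ∈ Sheaf.canonicalTopology (Sheaf J (Type u)) E := by
      intro E x y i g'' hxy hfxy
      obtain ⟨ι₂, b, χ, xh, hS2, h2⟩ := hloc d' E x
      apply GrothendieckTopology.transitive _ hS2
      rintro Y t ⟨Y', t', w', hof, rfl⟩
      cases hof with
      | mk l =>
      rw [Sieve.pullback_comp]
      apply GrothendieckTopology.pullback_stable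
      -- second level : work over p.obj (b l)
      have hx' : χ l ≫ x = p.map (xh l) := (h2 l).2
      have hxhc : p.map (xh l) ≫ σt = (χ l ≫ g'') ≫ fi i := by
        rw [← hx', Category.assoc, hfxy, ← Category.assoc]
      obtain ⟨xh', hxh'1, hxh'2⟩ := factor (xh l) i (χ l ≫ g'') hxhc
      obtain ⟨ι₃, a, ρ, yh, hS3, h3⟩ := hloc d' (p.obj (b l)) (χ l ≫ y)
      apply GrothendieckTopology.transitive _ hS3
      rintro Y₂ s ⟨Y₂', s', r', hof2, rfl⟩
      cases hof2 with
      | mk m =>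
      rw [Sieve.pullback_comp]
      apply GrothendieckTopology.pullback_stable
      -- now show the pulled-back sieve is everything
      have hy' : ρ m ≫ (χ l ≫ y) = p.map (yh m) := (h3 m).2
      have hyhc : p.map (yh m) ≫ σt = (ρ m ≫ χ l ≫ g'') ≫ fi i := by
        rw [← hy', Category.assoc, Category.assoc, ← hxy, hfxy]
        simp only [Category.assoc]
      obtain ⟨yh', hyh'1, hyh'2⟩ := factor (yh m) i (ρ m ≫ χ l ≫ g'') hyhc
      have keyeq : ρ m ≫ χ l ≫ x = ρ m ≫ χ l ≫ y := by
        rw [hx', hy', ← hxh'2, ← hyh'2, p.map_comp, p.map_comp, hxh'1, hyh'1]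
        simp only [Category.assoc]
      have : ((LocFibAux.eqSieve x y).pullback (χ l)).pullback (ρ m) = ⊤ := by
        rw [← Sieve.mem_iff_pullback_eq_top, Sieve.pullback_apply, LocFibAux.eqSieve_arrows,
          Category.assoc, Category.assoc]
        exact keyeq
      rw [this]
      apply GrothendieckTopology.top_mem
    -- σt is mono
    have hmono : Mono σt := by
      constructor
      intro E x y hxy
      have hS1 : (Sieve.generate (Presieve.ofArrows (fun i => p.obj (di i)) fi)).pullback
          (x ≫ σt) ∈ Sheaf.canonicalTopology (Sheaf J (Type u)) E :=
        (Sheaf.canonicalTopology (Sheaf J (Type u))).pullback_stable (x ≫ σt) hScov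
      have hT : LocFibAux.eqSieve x y ∈ Sheaf.canonicalTopology (Sheaf J (Type u)) E := by
        apply GrothendieckTopology.transitive _ hS1
        rintro Y t ht
        obtain ⟨Y', g'', w', hof, heq⟩ := ht
        cases hof with
        | mk i =>
        have hms := monostep (t ≫ x) (t ≫ y) i g''
          (by rw [Category.assoc, Category.assoc, hxy])
          (by rw [Category.assoc, heq])
        have hEq : (LocFibAux.eqSieve x y).pullback t =
            LocFibAux.eqSieve (t ≫ x) (t ≫ y) := by
          ext Y₃ q
          rw [Sieve.pullback_apply, LocFibAux.eqSieve_arrows, LocFibAux.eqSieve_arrows,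
            Category.assoc, Category.assoc]
        rw [hEq]
        exact hms
      exact LocFibAux.canon_sep hT (fun Y v hv => hv)
    haveI := hmono
    haveI := hepi
    haveI : IsIso σt := isIso_of_mono_of_epi σt
    refine ⟨d', fh, asIso σt, ?_, by simpa using F1.symm⟩
    intro d'' g h hcomp
    obtain ⟨ψ, ⟨hψ1, hψ2⟩, huniq⟩ := UP d'' g (h ≫ σt)
      (by rw [Category.assoc, F1, ← hcomp])
    have hpψ : p.map ψ = h := by
      have := hψ2
      rwa [cancel_mono σt] at this
    refine ⟨ψ, ⟨hpψ, hψ1⟩, ?_⟩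
    rintro ψ' ⟨hψ'1, hψ'2⟩
    exact huniq ψ' ⟨hψ'2, by rw [hψ'1, ← hpψ, hψ2]⟩
  · intro hSF
    refine ⟨hp, ?_⟩
    intro d c f
    obtain ⟨d', fhat, σ, hcart, hfaceq⟩ := hSF d c f
    refine ⟨PUnit.{u + 2}, fun _ => d', fun _ => σ.hom, fun _ => fhat, ?_, ?_⟩
    · have : Sieve.generate (Presieve.ofArrows (fun _ : PUnit.{u + 2} => p.obj d')
          (fun _ => σ.hom)) = ⊤ := by
        rw [← Sieve.id_mem_iff_eq_top]
        exact ⟨p.obj d', σ.inv, σ.hom, Presieve.ofArrows.mk PUnit.unit, by simp⟩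
      rw [this]
      apply GrothendieckTopology.top_mem
    · intro i
      constructor
      · constructor
        · intro d'' g h hcomp
          obtain ⟨h', ⟨hh'1, hh'2⟩, -⟩ := hcart g h hcomp
          refine ⟨⊤, GrothendieckTopology.top_mem _ _, ?_⟩
          intro e v _
          refine ⟨v ≫ h', ?_, ?_⟩
          · rw [p.map_comp, hh'1]
          · rw [Category.assoc, hh'2]
        · intro d'' h₁ h₂ hf hps
          refine ⟨⊤, GrothendieckTopology.top_mem _ _, ?_⟩
          intro e v _
          have hcomp : p.map h₁ ≫ p.map fhat = p.map (h₁ ≫ fhat) := (p.map_comp _ _).symm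
          obtain ⟨h', -, huniq⟩ := hcart (h₁ ≫ fhat) (p.map h₁) hcomp
          have e1 : h₁ = h' := huniq h₁ ⟨rfl, rfl⟩
          have e2 : h₂ = h' := huniq h₂ ⟨hps.symm, hf.symm⟩
          rw [e1, e2]
      · exact hfaceq.symm
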